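/- Let n ≥ 1, w > 0, A₀ > 0, σ > 0, and let s₁, …, sₙ ∈ ℝ². Then the expectation of the product of pointing losses under Gaussian beam displacement satisfies the exact identity ∫_{ℝ²} (∏_{i=1}^{n} A₀ exp(−2‖sᵢ+d‖²/w²)) · (1/(2πσ²)) exp(−‖d‖²/(2σ²)) dd = A₀ⁿ · exp(−(2/w²)∑_{i=1}^{n}‖sᵢ‖²) · ∫₀^∞ exp(−(2n/w² + 1/(2σ²))δ²) · (δ/σ²) · [(1/(2π)) ∫₀^{2π} exp(Kδ cos θ) dθ] dδ, where K = (4/w²)·‖∑_{i=1}^{n} sᵢ‖. (The inner angular integral (1/(2π))∫₀^{2π} exp(x cos θ) dθ is the modified Bessel function I₀(x).) -/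

import Mathlib

open Real MeasureTheory

lemma integrable_mul_exp_quadratic {a : ℝ} (ha : 0 < a) (b : ℝ) :
    Integrable (fun x : ℝ => x * Real.exp (-a * x ^ 2 + b * x)) := by
  have h1 : Integrable (fun x : ℝ => (x + b / (2 * a)) * Real.exp (-a * x ^ 2)) := by
    have h := (integrable_mul_exp_neg_mul_sq ha).add
      ((integrable_exp_neg_mul_sq ha).const_mul (b / (2 * a)))
    refine h.congr (Filter.Eventually.of_forall fun x => ?_)
    simp only [Pi.add_apply]
    ring
  have h2 := ((h1.comp_sub_right (b / (2 * a))).const_mul (Real.exp (b ^ 2 / (4 * a))))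
  refine h2.congr (Filter.Eventually.of_forall fun x => ?_)
  simp only
  have hx : x - b / (2 * a) + b / (2 * a) = x := by ring
  rw [hx, ← mul_assoc, mul_comm (Real.exp _) x, mul_assoc, ← Real.exp_add]
  congr 2
  field_simp
  ring

lemma angular_integral_eq (c1 c2 : ℝ) :
    (∫ θ in (0:ℝ)..(2*π), Real.exp (c1 * Real.cos θ + c2 * Real.sin θ))
      = ∫ θ in (0:ℝ)..(2*π), Real.exp (Real.sqrt (c1 ^ 2 + c2 ^ 2) * Real.cos θ) := by
  by_cases hz : c1 = 0 ∧ c2 = 0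
  · simp [hz.1, hz.2]
  · set r := Real.sqrt (c1 ^ 2 + c2 ^ 2) with hr
    have hrpos : 0 < r := by
      apply Real.sqrt_pos.2
      rcases not_and_or.1 hz with h | h
      · have := sq_nonneg c2; nlinarith [pow_pos (abs_pos.2 h) 2, sq_abs c1, sq_abs c2]
      · have := sq_nonneg c1; nlinarith [pow_pos (abs_pos.2 h) 2, sq_abs c1, sq_abs c2]
    set z : ℂ := ⟨c1, c2⟩ with hzdef
    have hz0 : z ≠ 0 := by
      simp only [ne_eq, Complex.ext_iff, Complex.zero_re, Complex.zero_im, hzdef]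
      tauto
    have habs : ‖z‖ = r := by
      rw [Complex.norm_def, Complex.normSq_mk, hr]
      congr 1; ring
    have hc1 : c1 = r * Real.cos z.arg := by
      rw [Complex.cos_arg hz0, habs]
      field_simp
      rfl
    have hc2 : c2 = r * Real.sin z.arg := by
      rw [Complex.sin_arg, habs]
      field_simp
      rfl
    have key : ∀ θ : ℝ, c1 * Real.cos θ + c2 * Real.sin θ = r * Real.cos (θ - z.arg) := by
      intro θ
      rw [Real.cos_sub]
      nth_rewrite 1 [hc1]; nth_rewrite 1 [hc2]
      ring
    have hper : Function.Periodic (fun θ : ℝ => Real.exp (r * Real.cos θ)) (2 * π) := by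
      intro θ; simp [Real.cos_add_two_pi]
    calc (∫ θ in (0:ℝ)..(2*π), Real.exp (c1 * Real.cos θ + c2 * Real.sin θ))
        = ∫ θ in (0:ℝ)..(2*π), (fun t => Real.exp (r * Real.cos t)) (θ - z.arg) := by
          simp only [key]
      _ = ∫ θ in (0:ℝ) - z.arg..(2*π) - z.arg, Real.exp (r * Real.cos θ) :=
          intervalIntegral.integral_comp_sub_right (fun t => Real.exp (r * Real.cos t)) z.arg
      _ = ∫ θ in (0:ℝ)..(2*π), Real.exp (r * Real.cos θ) := by
          have h := hper.intervalIntegral_add_eq (0 - z.arg) 0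
          rw [show (0:ℝ) - z.arg + 2 * π = 2 * π - z.arg by ring, zero_add] at h
          exact h

lemma pointwise_eq (n : ℕ) (A₀ w σ : ℝ) (s : Fin n → ℝ × ℝ) (d : ℝ × ℝ) :
    (∏ i, A₀ * Real.exp (-(2 * (((s i).1 + d.1) ^ 2 + ((s i).2 + d.2) ^ 2)) / w ^ 2)) *
      ((1 / (2 * π * σ ^ 2)) * Real.exp (-(d.1 ^ 2 + d.2 ^ 2) / (2 * σ ^ 2))) =
    (A₀ ^ n * Real.exp (-(2 / w ^ 2) * ∑ i, ((s i).1 ^ 2 + (s i).2 ^ 2))) *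
      ((1 / (2 * π * σ ^ 2)) *
        Real.exp (-((2 * n / w ^ 2 + 1 / (2 * σ ^ 2)) * (d.1 ^ 2 + d.2 ^ 2)
          + (4 / w ^ 2) * ((∑ i, (s i).1) * d.1 + (∑ i, (s i).2) * d.2)))) := by
  have e1 : ∀ X Z : ℝ, (A₀ ^ n * Real.exp X) * ((1 / (2 * π * σ ^ 2)) * Real.exp Z)
      = A₀ ^ n * (1 / (2 * π * σ ^ 2)) * Real.exp (X + Z) := by
    intro X Z; rw [Real.exp_add]; ring
  rw [Finset.prod_mul_distrib, Finset.prod_const, Finset.card_univ, Fintype.card_fin,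
    ← Real.exp_sum, e1, e1]
  congr 1
  have h1 : ∀ i : Fin n, -(2 * (((s i).1 + d.1) ^ 2 + ((s i).2 + d.2) ^ 2)) / w ^ 2
      = (-(2 / w ^ 2)) * ((s i).1 ^ 2 + (s i).2 ^ 2)
        + ((-(4 / w ^ 2) * d.1) * (s i).1 + (-(4 / w ^ 2) * d.2) * (s i).2)
        + (-(2 / w ^ 2)) * (d.1 ^ 2 + d.2 ^ 2) := fun i => by ring
  rw [Finset.sum_congr rfl fun i _ => h1 i]
  simp only [Finset.sum_add_distrib, ← Finset.mul_sum, Finset.sum_const, Finset.card_univ,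
    Fintype.card_fin, nsmul_eq_mul]
  ring


/-- Exact joint moment of pointing losses under Gaussian beam displacement
(Theorem 1 of the paper): the expectation of a product of `n` Gaussian-beam
pointing losses equals a radial Bessel-type integral. -/
theorem exact_joint_pointing_loss_moment
    (n : ℕ) (hn : 1 ≤ n) (w A₀ σ : ℝ) (hw : 0 < w) (hA : 0 < A₀) (hσ : 0 < σ)
    (s : Fin n → ℝ × ℝ)
    (K : ℝ)
    (hK : K = (4 / w ^ 2) * Real.sqrt ((∑ i, (s i).1) ^ 2 + (∑ i, (s i).2) ^ 2)) :
    (∫ d : ℝ × ℝ,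
        (∏ i, A₀ * Real.exp (-(2 * (((s i).1 + d.1) ^ 2 + ((s i).2 + d.2) ^ 2)) / w ^ 2)) *
          ((1 / (2 * π * σ ^ 2)) * Real.exp (-(d.1 ^ 2 + d.2 ^ 2) / (2 * σ ^ 2)))) =
      A₀ ^ n * Real.exp (-(2 / w ^ 2) * ∑ i, ((s i).1 ^ 2 + (s i).2 ^ 2)) *
        ∫ δ in Set.Ioi (0 : ℝ),
          Real.exp (-((2 * n / w ^ 2 + 1 / (2 * σ ^ 2)) * δ ^ 2)) * (δ / σ ^ 2) *
            ((1 / (2 * π)) * ∫ θ in (0 : ℝ)..(2 * π), Real.exp (K * δ * Real.cos θ)) := by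
  have hπ := Real.pi_pos
  set S1 := ∑ i, (s i).1 with hS1
  set S2 := ∑ i, (s i).2 with hS2
  set a : ℝ := 2 * n / w ^ 2 + 1 / (2 * σ ^ 2) with haa
  have ha : 0 < a := by positivity
  set c : ℝ := 4 / w ^ 2 with hcc
  have hc0 : 0 < c := by positivity
  set r : ℝ := Real.sqrt (S1 ^ 2 + S2 ^ 2) with hrr
  have hr0 : 0 ≤ r := Real.sqrt_nonneg _
  rw [hK]
  set G : ℝ × ℝ → ℝ := fun d =>
    (1 / (2 * π * σ ^ 2)) *
      Real.exp (-(a * (d.1 ^ 2 + d.2 ^ 2) + c * (S1 * d.1 + S2 * d.2))) with hG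
  set F : ℝ × ℝ → ℝ := fun p =>
    p.1 * ((1 / (2 * π * σ ^ 2)) *
      Real.exp (-(a * p.1 ^ 2 + c * (p.1 * (S1 * Real.cos p.2 + S2 * Real.sin p.2))))) with hF
  -- Step A : pointwise
  have stepA : (∫ d : ℝ × ℝ,
        (∏ i, A₀ * Real.exp (-(2 * (((s i).1 + d.1) ^ 2 + ((s i).2 + d.2) ^ 2)) / w ^ 2)) *
          ((1 / (2 * π * σ ^ 2)) * Real.exp (-(d.1 ^ 2 + d.2 ^ 2) / (2 * σ ^ 2))))
      = (A₀ ^ n * Real.exp (-(2 / w ^ 2) * ∑ i, ((s i).1 ^ 2 + (s i).2 ^ 2))) * ∫ d, G d := by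
    rw [← integral_const_mul]
    exact integral_congr_ae (Filter.Eventually.of_forall fun d => pointwise_eq n A₀ w σ s d)
  rw [stepA]
  congr 1
  -- polar coordinates
  have hpolar : (∫ d, G d) = ∫ p in polarCoord.target, p.1 • G (polarCoord.symm p) :=
    (integral_comp_polarCoord_symm G).symm
  have hFeq : ∀ p : ℝ × ℝ, p.1 • G (polarCoord.symm p) = F p := by
    intro p
    rw [polarCoord_symm_apply]
    simp only [smul_eq_mul, hG, hF]
    have h := Real.sin_sq_add_cos_sq p.2
    have hE : (-(a * ((p.1 * Real.cos p.2) ^ 2 + (p.1 * Real.sin p.2) ^ 2)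
          + c * (S1 * (p.1 * Real.cos p.2) + S2 * (p.1 * Real.sin p.2))))
        = -(a * p.1 ^ 2 + c * (p.1 * (S1 * Real.cos p.2 + S2 * Real.sin p.2))) := by
      linear_combination (-(a * p.1 ^ 2)) * h
    rw [hE]
  rw [hpolar]
  simp only [hFeq]
  rw [polarCoord_target, Measure.volume_eq_prod]
  -- integrability of F on the target
  have hBint : IntegrableOn
      (fun p : ℝ × ℝ =>
        (p.1 * ((1 / (2 * π * σ ^ 2)) * Real.exp (-a * p.1 ^ 2 + (c * r) * p.1))) * 1)
      (Set.Ioi (0 : ℝ) ×ˢ Set.Ioo (-π) π) (volume.prod volume) := by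
    rw [IntegrableOn, ← Measure.prod_restrict]
    refine Integrable.mul_prod
      (f := fun x : ℝ => x * (1 / (2 * π * σ ^ 2) * Real.exp (-a * x ^ 2 + c * r * x)))
      (g := fun _ : ℝ => (1 : ℝ)) ?_ ?_
    · refine Integrable.integrableOn ?_
      have h := (integrable_mul_exp_quadratic ha (c * r)).const_mul (1 / (2 * π * σ ^ 2))
      refine h.congr (Filter.Eventually.of_forall fun x => ?_)
      ring
    · exact integrableOn_const measure_Ioo_lt_top.ne
  have hFint : IntegrableOn F (Set.Ioi (0 : ℝ) ×ˢ Set.Ioo (-π) π) (volume.prod volume) := by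
    refine Integrable.mono' hBint ?_ ?_
    · apply Continuous.aestronglyMeasurable
      rw [hF]; fun_prop
    · refine (ae_restrict_mem (measurableSet_Ioi.prod measurableSet_Ioo)).mono fun p hp => ?_
      have hp1 : 0 < p.1 := hp.1
      have habs : |S1 * Real.cos p.2 + S2 * Real.sin p.2| ≤ r := by
        rw [hrr, ← Real.sqrt_sq_eq_abs]
        apply Real.sqrt_le_sqrt
        nlinarith [sq_nonneg (S1 * Real.sin p.2 - S2 * Real.cos p.2),
          Real.sin_sq_add_cos_sq p.2]
      have hX := abs_le.1 habs
      have hexp : Real.exp (-(a * p.1 ^ 2 + c * (p.1 * (S1 * Real.cos p.2 + S2 * Real.sin p.2))))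
          ≤ Real.exp (-a * p.1 ^ 2 + (c * r) * p.1) := by
        apply Real.exp_le_exp.2
        nlinarith [mul_le_mul_of_nonneg_left
          (show -(S1 * Real.cos p.2 + S2 * Real.sin p.2) ≤ r by linarith [hX.1])
          (le_of_lt (mul_pos hc0 hp1))]
      have hFnn : 0 ≤ F p := by
        rw [hF]; positivity
      rw [Real.norm_eq_abs, abs_of_nonneg hFnn, mul_one, hF]
      exact mul_le_mul_of_nonneg_left
        (mul_le_mul_of_nonneg_left hexp (by positivity)) hp1.le
  rw [setIntegral_prod F hFint]
  -- inner integral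
  have hinner : Set.EqOn (fun δ : ℝ => ∫ θ in Set.Ioo (-π) π, F (δ, θ))
      (fun δ : ℝ => Real.exp (-(a * δ ^ 2)) * (δ / σ ^ 2) *
        ((1 / (2 * π)) * ∫ θ in (0 : ℝ)..(2 * π), Real.exp (c * r * δ * Real.cos θ)))
      (Set.Ioi (0 : ℝ)) := by
    intro δ hδ
    have hδ0 : 0 < δ := hδ
    simp only
    have h1 : (∫ θ in Set.Ioo (-π) π, F (δ, θ)) = ∫ θ in (-π)..π, F (δ, θ) := by
      rw [intervalIntegral.integral_of_le (by linarith), integral_Ioc_eq_integral_Ioo]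
    have h2 : ∀ θ : ℝ, F (δ, θ) = (δ * (1 / (2 * π * σ ^ 2)) * Real.exp (-(a * δ ^ 2))) *
        Real.exp ((-(c * δ * S1)) * Real.cos θ + (-(c * δ * S2)) * Real.sin θ) := by
      intro θ
      simp only [hF]
      have : -(a * δ ^ 2 + c * (δ * (S1 * Real.cos θ + S2 * Real.sin θ)))
          = -(a * δ ^ 2) + ((-(c * δ * S1)) * Real.cos θ + (-(c * δ * S2)) * Real.sin θ) := by
        ring
      rw [this, Real.exp_add]
      ring
    rw [h1]
    simp only [h2]
    rw [intervalIntegral.integral_const_mul]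
    have hper : Function.Periodic
        (fun θ : ℝ => Real.exp ((-(c * δ * S1)) * Real.cos θ + (-(c * δ * S2)) * Real.sin θ))
        (2 * π) := by
      intro θ; simp [Real.cos_add_two_pi, Real.sin_add_two_pi]
    have hshift : (∫ θ in (-π)..π,
          Real.exp ((-(c * δ * S1)) * Real.cos θ + (-(c * δ * S2)) * Real.sin θ))
        = ∫ θ in (0 : ℝ)..(2 * π),
          Real.exp ((-(c * δ * S1)) * Real.cos θ + (-(c * δ * S2)) * Real.sin θ) := by
      have h := hper.intervalIntegral_add_eq (-π) 0
      rw [show -π + 2 * π = π by ring, zero_add] at h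
      exact h
    rw [hshift, angular_integral_eq]
    have hsq : Real.sqrt ((-(c * δ * S1)) ^ 2 + (-(c * δ * S2)) ^ 2) = c * r * δ := by
      have hr2 : r ^ 2 = S1 ^ 2 + S2 ^ 2 := Real.sq_sqrt (by positivity)
      have : (-(c * δ * S1)) ^ 2 + (-(c * δ * S2)) ^ 2 = (c * r * δ) ^ 2 := by
        linear_combination (c ^ 2 * δ ^ 2) * hr2.symm
      rw [this, Real.sqrt_sq (by positivity)]
    rw [hsq]
    ring
  rw [setIntegral_congr_fun measurableSet_Ioi hinner]
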